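/- Let 𝒱 be a Hilbert space continuously and densely embedded in a Hilbert space H, Q a continuous sesquilinear form on 𝒱 satisfying the weighted coercivity hypotheses: there exist Φ₁, Φ₂ ∈ ℒ(𝒱) extending to bounded operators on H and α > 0 with |Q(u,u)| + |Q(Φ₁u,u)| ≥ α‖u‖²_𝒱 and |Q(u,u)| + |Q(u,Φ₂u)| ≥ α‖u‖²_𝒱 for all u ∈ 𝒱. Define the operator L on H by Dom(L) = { u ∈ 𝒱 : v ↦ Q(u,v) is continuous on 𝒱 for the H-norm } and Q(u,v) = ⟨Lu, v⟩_H. Then: (i) L is bijective from Dom(L) onto H; (ii) Dom(L) is dense in 𝒱 and in H; (iii) L is closed. -/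

import Mathlib

open scoped InnerProductSpace

noncomputable section

section Aux

variable {𝒱 : Type*} [NormedAddCommGroup 𝒱] [InnerProductSpace ℂ 𝒱] [CompleteSpace 𝒱]

/-- The continuous linear functional `v ↦ star (Q u v)`. -/
def stmt9AuxFun (Q : 𝒱 →L[ℂ] (𝒱 →SL[starRingEnd ℂ] ℂ)) (u : 𝒱) : 𝒱 →L[ℂ] ℂ :=
  LinearMap.mkContinuous
    { toFun := fun v => star (Q u v)
      map_add' := by intro v w; simp
      map_smul' := by intro c v; simp [map_smulₛₗ] }
    ‖Q u‖ (fun v => by simpa using (Q u).le_opNorm v)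

lemma stmt9AuxFun_apply (Q : 𝒱 →L[ℂ] (𝒱 →SL[starRingEnd ℂ] ℂ)) (u v : 𝒱) :
    stmt9AuxFun Q u v = star (Q u v) := rfl

/-- The Riesz representation operator `A` with `Q u v = ⟪v, A u⟫`. -/
def stmt9Riesz (Q : 𝒱 →L[ℂ] (𝒱 →SL[starRingEnd ℂ] ℂ)) (u : 𝒱) : 𝒱 :=
  (InnerProductSpace.toDual ℂ 𝒱).symm (stmt9AuxFun Q u)

lemma stmt9Riesz_spec (Q : 𝒱 →L[ℂ] (𝒱 →SL[starRingEnd ℂ] ℂ)) (u v : 𝒱) :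
    Q u v = ⟪v, stmt9Riesz Q u⟫_ℂ := by
  have h : ⟪stmt9Riesz Q u, v⟫_ℂ = stmt9AuxFun Q u v :=
    InnerProductSpace.toDual_symm_apply
  rw [← inner_conj_symm, h, stmt9AuxFun_apply]
  simp

/-- `A` bundled as a continuous linear map. -/
def stmt9A (Q : 𝒱 →L[ℂ] (𝒱 →SL[starRingEnd ℂ] ℂ)) : 𝒱 →L[ℂ] 𝒱 :=
  LinearMap.mkContinuous
    { toFun := stmt9Riesz Q
      map_add' := by
        intro u w
        refine ext_inner_left ℂ fun v => ?_
        rw [inner_add_right, ← stmt9Riesz_spec, ← stmt9Riesz_spec, ← stmt9Riesz_spec]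
        simp
      map_smul' := by
        intro c u
        refine ext_inner_left ℂ fun v => ?_
        rw [inner_smul_right, ← stmt9Riesz_spec, ← stmt9Riesz_spec]
        simp }
    ‖Q‖ (fun u => by
      have h1 : ‖stmt9Riesz Q u‖ = ‖stmt9AuxFun Q u‖ :=
        LinearIsometryEquiv.norm_map _ _
      have h2 : ‖stmt9AuxFun Q u‖ ≤ ‖Q u‖ :=
        LinearMap.mkContinuous_norm_le _ (norm_nonneg _) _
      calc ‖stmt9Riesz Q u‖ ≤ ‖Q u‖ := by rw [h1]; exact h2
        _ ≤ ‖Q‖ * ‖u‖ := Q.le_opNorm u)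

lemma stmt9A_spec (Q : 𝒱 →L[ℂ] (𝒱 →SL[starRingEnd ℂ] ℂ)) (u v : 𝒱) :
    Q u v = ⟪v, stmt9A Q u⟫_ℂ := stmt9Riesz_spec Q u v

end Aux

theorem stmt9 {𝒱 H : Type*} [NormedAddCommGroup 𝒱] [InnerProductSpace ℂ 𝒱]
    [CompleteSpace 𝒱] [NormedAddCommGroup H] [InnerProductSpace ℂ H]
    [CompleteSpace H]
    (ι : 𝒱 →L[ℂ] H) (hι : Function.Injective ι) (hdense : DenseRange ι)
    (Q : 𝒱 →L[ℂ] (𝒱 →SL[starRingEnd ℂ] ℂ))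
    (Φ₁ Φ₂ : 𝒱 →L[ℂ] 𝒱) (α : ℝ) (hα : 0 < α)
    (h1 : ∀ u : 𝒱, ‖Q u u‖ + ‖Q (Φ₁ u) u‖ ≥ α * ‖u‖ ^ 2)
    (h2 : ∀ u : 𝒱, ‖Q u u‖ + ‖Q u (Φ₂ u)‖ ≥ α * ‖u‖ ^ 2)
    (Φ₁H Φ₂H : H →L[ℂ] H)
    (hΦ₁ : ∀ u : 𝒱, Φ₁H (ι u) = ι (Φ₁ u))
    (hΦ₂ : ∀ u : 𝒱, Φ₂H (ι u) = ι (Φ₂ u)) :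
    -- (i) `L : Dom(L) → H` is bijective:
    (∀ f : H, ∃! u : 𝒱, ∀ v : 𝒱, Q u v = ⟪ι v, f⟫_ℂ) ∧
    -- (ii) `Dom(L)` is dense in `𝒱` and in `H`:
    Dense {u : 𝒱 | ∃ f : H, ∀ v : 𝒱, Q u v = ⟪ι v, f⟫_ℂ} ∧
    Dense {h : H | ∃ u : 𝒱, ι u = h ∧ ∃ f : H, ∀ v : 𝒱, Q u v = ⟪ι v, f⟫_ℂ} ∧
    -- (iii) `L` is closed (its graph is closed in `H × H`):
    IsClosed {p : H × H | ∃ u : 𝒱, ι u = p.1 ∧ ∀ v : 𝒱, Q u v = ⟪ι v, p.2⟫_ℂ} := by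
  classical
  set A : 𝒱 →L[ℂ] 𝒱 := stmt9A Q with hA
  have key : ∀ u v : 𝒱, Q u v = ⟪v, A u⟫_ℂ := fun u v => stmt9A_spec Q u v
  -- lower bound: `‖u‖ ≤ C * ‖A u‖`
  set C : ℝ := (1 + ‖Φ₂‖) / α with hC
  have hCpos : 0 < C := by positivity
  have hlow : ∀ u : 𝒱, ‖u‖ ≤ C * ‖A u‖ := by
    intro u
    have e1 : ‖Q u u‖ ≤ ‖u‖ * ‖A u‖ := by
      rw [key]; exact norm_inner_le_norm _ _
    have e2 : ‖Q u (Φ₂ u)‖ ≤ ‖Φ₂‖ * ‖u‖ * ‖A u‖ := by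
      rw [key]
      calc ‖⟪Φ₂ u, A u⟫_ℂ‖ ≤ ‖Φ₂ u‖ * ‖A u‖ := norm_inner_le_norm _ _
        _ ≤ ‖Φ₂‖ * ‖u‖ * ‖A u‖ := by
            have := Φ₂.le_opNorm u
            have := norm_nonneg (A u)
            nlinarith
    have e3 := h2 u
    have e4 : α * ‖u‖ ^ 2 ≤ (1 + ‖Φ₂‖) * (‖u‖ * ‖A u‖) := by nlinarith
    rcases eq_or_ne u 0 with rfl | hu
    · simp
    · have hnu : 0 < ‖u‖ := norm_pos_iff.mpr hu
      rw [hC, div_mul_eq_mul_div, le_div_iff₀ hα]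
      nlinarith
  have hanti : AntilipschitzWith C.toNNReal A :=
    A.antilipschitz_of_bound (fun u => by
      simpa [Real.coe_toNNReal _ hCpos.le] using hlow u)
  have hinj : Function.Injective A := hanti.injective
  have hclosedrange : IsClosed (Set.range A) :=
    hanti.isClosed_range A.uniformContinuous
  -- surjectivity
  have hker : LinearMap.ker (A : 𝒱 →ₗ[ℂ] 𝒱) = ⊥ := LinearMap.ker_eq_bot.mpr hinj
  have hrange : LinearMap.range (A : 𝒱 →ₗ[ℂ] 𝒱) = ⊤ := by
    haveI : CompleteSpace (LinearMap.range (A : 𝒱 →ₗ[ℂ] 𝒱) : Submodule ℂ 𝒱) := by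
      refine IsClosed.completeSpace_coe (hs := ?_)
      have : ((LinearMap.range (A : 𝒱 →ₗ[ℂ] 𝒱) : Submodule ℂ 𝒱) : Set 𝒱) = Set.range A := by
        simp [LinearMap.coe_range]
      rw [this]; exact hclosedrange
    rw [← Submodule.orthogonal_eq_bot_iff]
    rw [Submodule.eq_bot_iff]
    intro w hw
    have hzero : ∀ u : 𝒱, Q u w = 0 := by
      intro u
      have : ⟪A u, w⟫_ℂ = 0 := hw (A u) (LinearMap.mem_range_self _ u)
      rw [key, ← inner_conj_symm, this]; simp
    have := h1 w
    rw [hzero w, hzero (Φ₁ w)] at this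
    simp only [norm_zero, add_zero] at this
    have : ‖w‖ ^ 2 ≤ 0 := by nlinarith
    have : ‖w‖ = 0 := by nlinarith [sq_nonneg ‖w‖, norm_nonneg w]
    exact norm_eq_zero.mp this
  set e : 𝒱 ≃L[ℂ] 𝒱 := ContinuousLinearEquiv.ofBijective A hker hrange with he
  have he_apply : ∀ u, e u = A u := fun u => rfl
  have hAes : ∀ x : 𝒱, A (e.symm x) = x := fun x => by
    rw [← he_apply]; exact e.apply_symm_apply x
  -- adjoint of ι
  set ιs : H →L[ℂ] 𝒱 := ContinuousLinearMap.adjoint ι with hιs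
  have hadj : ∀ (v : 𝒱) (f : H), ⟪ι v, f⟫_ℂ = ⟪v, ιs f⟫_ℂ := fun v f => by
    rw [hιs, ContinuousLinearMap.adjoint_inner_right]
  -- characterization
  have hchar : ∀ (u : 𝒱) (f : H), (∀ v : 𝒱, Q u v = ⟪ι v, f⟫_ℂ) ↔ A u = ιs f := by
    intro u f
    constructor
    · intro h
      refine ext_inner_left ℂ fun v => ?_
      rw [← key, h v, hadj]
    · intro h v
      rw [key, h, hadj]
  -- dense range of ιs
  have hιsdense : Dense (Set.range ιs) := by
    have htop : (LinearMap.range (ιs : H →ₗ[ℂ] 𝒱)).topologicalClosure = ⊤ := by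
      rw [Submodule.topologicalClosure_eq_top_iff, Submodule.eq_bot_iff]
      intro w hw
      have hzero : ∀ f : H, ⟪f, ι w⟫_ℂ = 0 := by
        intro f
        have h0 : ⟪ιs f, w⟫_ℂ = 0 := hw (ιs f) (LinearMap.mem_range_self _ f)
        rw [hιs] at h0
        rw [← ContinuousLinearMap.adjoint_inner_left ι]
        exact h0
      have : ι w = 0 := by
        have := hzero (ι w)
        rwa [inner_self_eq_zero] at this
      have : ι w = ι 0 := by simpa using this
      exact hι this
    have := Submodule.dense_iff_topologicalClosure_eq_top.mpr htop
    exact this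
  -- conclusions
  have hDeq : {u : 𝒱 | ∃ f : H, ∀ v : 𝒱, Q u v = ⟪ι v, f⟫_ℂ}
      = {u : 𝒱 | ∃ f : H, A u = ιs f} := by
    ext u; exact exists_congr fun f => hchar u f
  have hDdense : Dense {u : 𝒱 | ∃ f : H, ∀ v : 𝒱, Q u v = ⟪ι v, f⟫_ℂ} := by
    rw [hDeq]
    have himg : Dense ((e.symm : 𝒱 → 𝒱) '' (Set.range ιs)) := by
      refine DenseRange.dense_image ?_ e.symm.continuous hιsdense
      exact e.symm.surjective.denseRange
    refine himg.mono ?_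
    rintro x ⟨y, ⟨f, rfl⟩, rfl⟩
    exact ⟨f, hAes (ιs f)⟩
  refine ⟨?_, hDdense, ?_, ?_⟩
  · -- (i)
    intro f
    refine ⟨e.symm (ιs f), (hchar _ f).mpr (hAes (ιs f)), ?_⟩
    intro u hu
    have h1' : A u = ιs f := (hchar u f).mp hu
    have h2' : A (e.symm (ιs f)) = ιs f := hAes (ιs f)
    exact hinj (h1'.trans h2'.symm)
  · -- dense in H
    have : {h : H | ∃ u : 𝒱, ι u = h ∧ ∃ f : H, ∀ v : 𝒱, Q u v = ⟪ι v, f⟫_ℂ}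
        = ι '' {u : 𝒱 | ∃ f : H, ∀ v : 𝒱, Q u v = ⟪ι v, f⟫_ℂ} := by
      ext h; constructor
      · rintro ⟨u, hu, hf⟩; exact ⟨u, hf, hu⟩
      · rintro ⟨u, hf, hu⟩; exact ⟨u, hu, hf⟩
    rw [this]
    exact hdense.dense_image ι.continuous hDdense
  · -- (iii) closedness
    have hset : {p : H × H | ∃ u : 𝒱, ι u = p.1 ∧ ∀ v : 𝒱, Q u v = ⟪ι v, p.2⟫_ℂ}
        = {p : H × H | p.1 = ι (e.symm (ιs p.2))} := by
      ext p; constructor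
      · rintro ⟨u, hu, hq⟩
        have : A u = ιs p.2 := (hchar u p.2).mp hq
        have hu' : u = e.symm (ιs p.2) := by
          apply hinj
          rw [this, hAes]
        show p.1 = ι (e.symm (ιs p.2))
        rw [← hu, hu']
      · intro hp
        exact ⟨e.symm (ιs p.2), hp.symm, (hchar _ p.2).mpr (hAes (ιs p.2))⟩
    rw [hset]
    exact isClosed_eq continuous_fst
      (ι.continuous.comp (e.symm.continuous.comp (ιs.continuous.comp continuous_snd)))

end
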